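/- arXiv:1602.08879 — 5 statements merged into one kernel-verified Lean document; each statement's English description precedes it below -/
import Mathlib

section
/- A Skolem sequence of order m exists if and only if m ≡ 0 or 1 (mod 4). -/
/-- A Skolem sequence of order `m`: pairs `(a i, b i)` for symbols `i+1`
(`i : Fin m`), with `b i - a i = i+1`, whose entries partition `{1,…,2m}`. -/
def IsSkolemSeq (m : ℕ) (a b : Fin m → ℕ) : Prop :=
  Function.Injective (Sum.elim a b) ∧
  (∀ i : Fin m, a i + ((i : ℕ) + 1) = b i) ∧
  (∀ x : ℕ, (∃ s : Fin m ⊕ Fin m, Sum.elim a b s = x) ↔ x ∈ Finset.Icc 1 (2 * m))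

/-- Position of the first occurrence of symbol `d`, case `m = 4k`. -/
def skA (k d : ℕ) : ℕ :=
  if d % 2 = 1 ∧ d ≤ 2*k then 6*k+1-(d-1)/2
  else if d % 2 = 0 ∧ d ≤ 2*k then 2*k+1-(d-2)/2
  else if d = 2*k+1 then 1
  else if d % 2 = 0 ∧ d ≤ 4*k-2 then 5*k-(d-2*k-2)/2
  else if d % 2 = 1 then k-(d-2*k-3)/2
  else k+1

/-- Position of the first occurrence of symbol `d`, case `m = 4k+1`. -/
def skA1 (k d : ℕ) : ℕ :=
  if d = 1 then 7*k+1
  else if d % 2 = 0 ∧ d ≤ 2*k-2 then 6*k-(d-2)/2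
  else if d % 2 = 1 ∧ d ≤ 4*k-1 then 2*k-1-(d-3)/2
  else if d = 2*k then 2*k+1
  else if d % 2 = 0 then 5*k+1-(d-2*k-2)/2
  else 2*k

lemma skolem_build (m : ℕ) (A : ℕ → ℕ)
    (hrange : ∀ d, 1 ≤ d → d ≤ m → 1 ≤ A d ∧ A d + d ≤ 2*m)
    (hinjA : ∀ d e, 1 ≤ d → d ≤ m → 1 ≤ e → e ≤ m → A d = A e → d = e)
    (hinjB : ∀ d e, 1 ≤ d → d ≤ m → 1 ≤ e → e ≤ m → A d + d = A e + e → d = e)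
    (hdisj : ∀ d e, 1 ≤ d → d ≤ m → 1 ≤ e → e ≤ m → A d ≠ A e + e) :
    ∃ a b : Fin m → ℕ, IsSkolemSeq m a b := by
  refine ⟨fun i => A ((i : ℕ)+1), fun i => A ((i : ℕ)+1) + ((i : ℕ)+1), ?_, fun i => rfl, ?_⟩
  · rintro (i | i) (j | j) h <;> simp only [Sum.elim_inl, Sum.elim_inr] at h
    · have := hinjA ((i : ℕ)+1) ((j : ℕ)+1) (by omega) (by omega) (by omega) (by omega) h
      exact congrArg Sum.inl (Fin.ext (by omega))
    · exact absurd h (hdisj _ _ (by omega) (by omega) (by omega) (by omega))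
    · exact absurd h.symm (hdisj _ _ (by omega) (by omega) (by omega) (by omega))
    · have := hinjB ((i : ℕ)+1) ((j : ℕ)+1) (by omega) (by omega) (by omega) (by omega) h
      exact congrArg Sum.inr (Fin.ext (by omega))
  · have hinj : Function.Injective (Sum.elim (fun i : Fin m => A ((i : ℕ)+1))
        (fun i : Fin m => A ((i : ℕ)+1) + ((i : ℕ)+1))) := by
      rintro (i | i) (j | j) h <;> simp only [Sum.elim_inl, Sum.elim_inr] at h
      · have := hinjA ((i : ℕ)+1) ((j : ℕ)+1) (by omega) (by omega) (by omega) (by omega) h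
        exact congrArg Sum.inl (Fin.ext (by omega))
      · exact absurd h (hdisj _ _ (by omega) (by omega) (by omega) (by omega))
      · exact absurd h.symm (hdisj _ _ (by omega) (by omega) (by omega) (by omega))
      · have := hinjB ((i : ℕ)+1) ((j : ℕ)+1) (by omega) (by omega) (by omega) (by omega) h
        exact congrArg Sum.inr (Fin.ext (by omega))
    have hmem : ∀ s : Fin m ⊕ Fin m, Sum.elim (fun i : Fin m => A ((i : ℕ)+1))
        (fun i : Fin m => A ((i : ℕ)+1) + ((i : ℕ)+1)) s ∈ Finset.Icc 1 (2*m) := by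
      rintro (i | i) <;> simp only [Sum.elim_inl, Sum.elim_inr, Finset.mem_Icc]
      · have := hrange ((i : ℕ)+1) (by omega) (by omega); omega
      · have := hrange ((i : ℕ)+1) (by omega) (by omega); omega
    intro x
    constructor
    · rintro ⟨s, rfl⟩; exact hmem s
    · intro hx
      let g : Fin m ⊕ Fin m → ↥(Finset.Icc 1 (2*m)) := fun s =>
        ⟨Sum.elim (fun i : Fin m => A ((i : ℕ)+1))
          (fun i : Fin m => A ((i : ℕ)+1) + ((i : ℕ)+1)) s, hmem s⟩
      have hginj : Function.Injective g := by
        intro s t h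
        exact hinj (congrArg Subtype.val h)
      have hcard : Fintype.card (Fin m ⊕ Fin m) = Fintype.card ↥(Finset.Icc 1 (2*m)) := by
        simp [Nat.card_Icc]; omega
      have hgsurj : Function.Surjective g :=
        ((Fintype.bijective_iff_injective_and_card g).2 ⟨hginj, hcard⟩).2
      obtain ⟨s, hs⟩ := hgsurj ⟨x, hx⟩
      exact ⟨s, congrArg Subtype.val hs⟩

set_option maxHeartbeats 1000000 in
lemma skolem_mode0 (k : ℕ) (hk : 1 ≤ k) :
    ∃ a b : Fin (4*k) → ℕ, IsSkolemSeq (4*k) a b := by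
  apply skolem_build (4*k) (skA k)
  · intro d h1 h2; unfold skA; split_ifs <;> omega
  · intro d e h1 h2 h3 h4 h; unfold skA at h; split_ifs at h <;> omega
  · intro d e h1 h2 h3 h4 h; unfold skA at h; split_ifs at h <;> omega
  · intro d e h1 h2 h3 h4 h; unfold skA at h; split_ifs at h <;> omega

set_option maxHeartbeats 1000000 in
lemma skolem_mode1 (k : ℕ) (hk : 1 ≤ k) :
    ∃ a b : Fin (4*k+1) → ℕ, IsSkolemSeq (4*k+1) a b := by
  apply skolem_build (4*k+1) (skA1 k)
  · intro d h1 h2; unfold skA1; split_ifs <;> omega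
  · intro d e h1 h2 h3 h4 h; unfold skA1 at h; split_ifs at h <;> omega
  · intro d e h1 h2 h3 h4 h; unfold skA1 at h; split_ifs at h <;> omega
  · intro d e h1 h2 h3 h4 h; unfold skA1 at h; split_ifs at h <;> omega

lemma skolem_small (m : ℕ) (hm : m ≤ 1) :
    ∃ a b : Fin m → ℕ, IsSkolemSeq m a b := by
  apply skolem_build m (fun _ => 1)
  · intro d h1 h2; omega
  · intro d e h1 h2 h3 h4 h; omega
  · intro d e h1 h2 h3 h4 h; omega
  · intro d e h1 h2 h3 h4 h; omega

theorem skolemSeq_exists_iff (m : ℕ) :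
    (∃ a b : Fin m → ℕ, IsSkolemSeq m a b) ↔ m % 4 = 0 ∨ m % 4 = 1 := by
  constructor
  · rintro ⟨a, b, hinj, hab, hmem⟩
    have himg : Finset.image (Sum.elim a b) Finset.univ = Finset.Icc 1 (2*m) := by
      ext x
      simp only [Finset.mem_image, Finset.mem_univ, true_and]
      exact hmem x
    have hsum1 : ∑ x ∈ Finset.image (Sum.elim a b) Finset.univ, x
        = ∑ s : Fin m ⊕ Fin m, Sum.elim a b s :=
      Finset.sum_image (fun x _ y _ h => hinj h)
    have hsum2 : ∑ s : Fin m ⊕ Fin m, Sum.elim a b s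
        = (∑ i : Fin m, a i) + ∑ i : Fin m, b i := by
      rw [Fintype.sum_sum_type]; rfl
    have hb : ∑ i : Fin m, b i = (∑ i : Fin m, a i) + ∑ i : Fin m, ((i : ℕ) + 1) := by
      rw [← Finset.sum_add_distrib]
      exact Finset.sum_congr rfl (fun i _ => (hab i).symm)
    set S := ∑ i : Fin m, a i with hS
    have hT : ∑ i : Fin m, ((i : ℕ) + 1) = ∑ i ∈ Finset.range (m+1), i := by
      rw [Fin.sum_univ_eq_sum_range (fun i => i + 1) m, Finset.sum_range_succ']
      simp
    have hT2 : (∑ i ∈ Finset.range (m+1), i) * 2 = (m+1) * m := Finset.sum_range_id_mul_two (m+1)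
    have hG : ∑ x ∈ Finset.Icc 1 (2*m), x = ∑ i ∈ Finset.range (2*m+1), i := by
      rw [Finset.sum_range_succ']
      rw [Finset.range_eq_Ico, ← Finset.Ico_add_one_right_eq_Icc]
      rw [Finset.sum_Ico_eq_sum_range]
      simp [add_comm]
    have hG2 : (∑ i ∈ Finset.range (2*m+1), i) * 2 = (2*m+1) * (2*m) :=
      Finset.sum_range_id_mul_two (2*m+1)
    have key0 : S + (S + ∑ i ∈ Finset.range (m+1), i) = ∑ i ∈ Finset.range (2*m+1), i := by
      have h' := hsum1
      rw [himg, hG] at h'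
      rw [hsum2, hb, hT] at h'
      omega
    have key : 4*S = 3*(m*m) + m := by
      have e1 : (S + (S + ∑ i ∈ Finset.range (m+1), i)) * 2
          = (∑ i ∈ Finset.range (2*m+1), i) * 2 := by rw [key0]
      have e2 : (∑ i ∈ Finset.range (m+1), i) * 2 = m*m + m := by rw [hT2]; ring
      have e3 : (∑ i ∈ Finset.range (2*m+1), i) * 2 = 4*(m*m) + 2*m := by rw [hG2]; ring
      obtain ⟨u, hu⟩ : ∃ u, m*m = u := ⟨m*m, rfl⟩
      rw [hu] at e2 e3 ⊢
      omega
    obtain ⟨q, r, hr, hmqr⟩ : ∃ q r, r < 4 ∧ m = 4*q + r := ⟨m/4, m%4, by omega, by omega⟩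
    subst hmqr
    have key2 : 4*S = 48*(q*q) + 24*(q*r) + 3*(r*r) + 4*q + r := by
      rw [key]; ring
    clear_value S
    interval_cases r <;>
      (ring_nf at key2; generalize hq : q^2 = t at key2; omega)
  · intro h
    rcases h with h | h
    · rcases Nat.eq_zero_or_pos m with rfl | hm
      · exact skolem_small 0 (by norm_num)
      · have hk : m = 4 * (m/4) := by omega
        have hk1 : 1 ≤ m/4 := by omega
        rw [hk]
        exact skolem_mode0 (m/4) hk1
    · rcases Nat.lt_or_ge m 2 with hm | hm
      · exact skolem_small m (by omega)
      · have hk : m = 4 * (m/4) + 1 := by omega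
        have hk1 : 1 ≤ m/4 := by omega
        rw [hk]
        exact skolem_mode1 (m/4) hk1
end

section
/- A Skolem circle of order m exists if and only if m ≡ 0 or 1 (mod 4). -/
private def evA (k d : ℕ) : ℕ :=
  if d % 2 = 1 then
    if d + 1 ≤ 2*k then 3*k - 1 - d/2
    else if d = 2*k+1 then 7*k - 1
    else 7*k - 1 - d/2
  else
    if d ≤ 2*k then 7*k - 1 - d/2
    else if d + 2 ≤ 4*k then 3*k - d/2
    else 0

private def evB (k d : ℕ) : ℕ :=
  if d % 2 = 1 then
    if d + 1 ≤ 2*k then 3*k + d/2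
    else if d = 2*k+1 then k
    else d/2 - k
  else
    if d ≤ 2*k then 7*k - 1 + d/2
    else if d + 2 ≤ 4*k then 3*k + d/2
    else 4*k

private lemma evA_lt (k d : ℕ) (h1 : 1 ≤ d) (h2 : d ≤ 4*k) : evA k d < 8*k := by
  unfold evA; split_ifs <;> omega

private lemma evB_lt (k d : ℕ) (h1 : 1 ≤ d) (h2 : d ≤ 4*k) : evB k d < 8*k := by
  unfold evB; split_ifs <;> omega

private lemma ev_diff (k d : ℕ) (h1 : 1 ≤ d) (h2 : d ≤ 4*k) :
    evB k d = evA k d + d ∨ evB k d + 8*k = evA k d + d := by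
  unfold evA evB; split_ifs <;> omega

private lemma evA_inj (k d e : ℕ) (h1 : 1 ≤ d) (h2 : d ≤ 4*k) (h3 : 1 ≤ e) (h4 : e ≤ 4*k)
    (h : evA k d = evA k e) : d = e := by
  unfold evA at h; split_ifs at h <;> omega

private lemma evB_inj (k d e : ℕ) (h1 : 1 ≤ d) (h2 : d ≤ 4*k) (h3 : 1 ≤ e) (h4 : e ≤ 4*k)
    (h : evB k d = evB k e) : d = e := by
  unfold evB at h; split_ifs at h <;> omega

private lemma evAB (k d e : ℕ) (h1 : 1 ≤ d) (h2 : d ≤ 4*k) (h3 : 1 ≤ e) (h4 : e ≤ 4*k) :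
    evA k d ≠ evB k e := by
  unfold evA evB; split_ifs <;> omega

private def odA (k d : ℕ) : ℕ :=
  if d % 2 = 1 then
    if d + 1 ≤ 2*k then 5*k - d/2
    else if d = 2*k+1 then 0
    else if d + 2 ≤ 4*k+1 then 9*k + 2 - d/2
    else 2*k
  else
    if d + 2 ≤ 2*k then k - d/2
    else if d = 2*k then 7*k + 2
    else 5*k + 1 - d/2

private def odB (k d : ℕ) : ℕ :=
  if d % 2 = 1 then
    if d + 1 ≤ 2*k then 5*k + d/2 + 1
    else if d = 2*k+1 then 2*k + 1
    else if d + 2 ≤ 4*k+1 then k + d/2 + 1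
    else 6*k + 1
  else
    if d + 2 ≤ 2*k then k + d/2
    else if d = 2*k then k
    else 5*k + 1 + d/2

private lemma odA_lt (k d : ℕ) (h1 : 1 ≤ d) (h2 : d ≤ 4*k+1) : odA k d < 8*k+2 := by
  unfold odA; split_ifs <;> omega

private lemma odB_lt (k d : ℕ) (h1 : 1 ≤ d) (h2 : d ≤ 4*k+1) : odB k d < 8*k+2 := by
  unfold odB; split_ifs <;> omega

private lemma od_diff (k d : ℕ) (h1 : 1 ≤ d) (h2 : d ≤ 4*k+1) :
    odB k d = odA k d + d ∨ odB k d + (8*k+2) = odA k d + d := by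
  unfold odA odB; split_ifs <;> omega

private lemma odA_inj (k d e : ℕ) (h1 : 1 ≤ d) (h2 : d ≤ 4*k+1) (h3 : 1 ≤ e) (h4 : e ≤ 4*k+1)
    (h : odA k d = odA k e) : d = e := by
  unfold odA at h; split_ifs at h <;> omega

private lemma odB_inj (k d e : ℕ) (h1 : 1 ≤ d) (h2 : d ≤ 4*k+1) (h3 : 1 ≤ e) (h4 : e ≤ 4*k+1)
    (h : odB k d = odB k e) : d = e := by
  unfold odB at h; split_ifs at h <;> omega

private lemma odAB (k d e : ℕ) (h1 : 1 ≤ d) (h2 : d ≤ 4*k+1) (h3 : 1 ≤ e) (h4 : e ≤ 4*k+1) :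
    odA k d ≠ odB k e := by
  unfold odA odB; split_ifs <;> omega

/-- A Skolem circle of order `m`: pairs `(a i, b i)` of positions in `ZMod (2m)`
for the symbols `i+1` (`i : Fin m`), all `2m` entries distinct (hence a partition
of `ZMod (2m)`), with `b i - a i ≡ i+1 (mod 2m)`. -/
def IsSkolemCircle (m : ℕ) (a b : Fin m → ZMod (2 * m)) : Prop :=
  Function.Injective (Sum.elim a b) ∧
  (∀ i : Fin m, b i - a i = (((i : ℕ) + 1 : ℕ) : ZMod (2 * m)))

private lemma skolem_of_tables (m : ℕ) (A B : ℕ → ℕ)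
    (hAlt : ∀ d, 1 ≤ d → d ≤ m → A d < 2*m)
    (hBlt : ∀ d, 1 ≤ d → d ≤ m → B d < 2*m)
    (hdiff : ∀ d, 1 ≤ d → d ≤ m → B d = A d + d ∨ B d + 2*m = A d + d)
    (hAinj : ∀ d e, 1 ≤ d → d ≤ m → 1 ≤ e → e ≤ m → A d = A e → d = e)
    (hBinj : ∀ d e, 1 ≤ d → d ≤ m → 1 ≤ e → e ≤ m → B d = B e → d = e)
    (hAB : ∀ d e, 1 ≤ d → d ≤ m → 1 ≤ e → e ≤ m → A d ≠ B e) (hm : 1 ≤ m) :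
    ∃ a b : Fin m → ZMod (2*m), IsSkolemCircle m a b := by
  haveI : NeZero (2*m) := ⟨by omega⟩
  have key : ∀ u v : ℕ, u < 2*m → v < 2*m → ((u : ZMod (2*m)) = (v : ZMod (2*m))) → u = v := by
    intro u v hu hv h
    have h2 := congrArg ZMod.val h
    rwa [ZMod.val_cast_of_lt hu, ZMod.val_cast_of_lt hv] at h2
  refine ⟨fun i => ((A (i.1+1) : ℕ) : ZMod (2*m)), fun i => ((B (i.1+1) : ℕ) : ZMod (2*m)), ?_, ?_⟩
  · rintro (i | i) (j | j) hst <;>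
      simp only [Sum.elim_inl, Sum.elim_inr] at hst
    · have h1 := key _ _ (hAlt _ (by omega) (by omega) : A (i.1+1) < 2*m)
        (hAlt _ (by omega) (by omega)) hst
      have := hAinj _ _ (by omega) (by omega) (by omega) (by omega) h1
      exact congrArg Sum.inl (Fin.ext (by omega))
    · have h1 := key _ _ (hAlt _ (by omega) (by omega))
        (hBlt _ (by omega) (by omega)) hst
      exact absurd h1 (hAB _ _ (by omega) (by omega) (by omega) (by omega))
    · have h1 := key _ _ (hBlt _ (by omega) (by omega))
        (hAlt _ (by omega) (by omega)) hst
      exact absurd h1.symm (hAB _ _ (by omega) (by omega) (by omega) (by omega))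
    · have h1 := key _ _ (hBlt _ (by omega) (by omega))
        (hBlt _ (by omega) (by omega)) hst
      have := hBinj _ _ (by omega) (by omega) (by omega) (by omega) h1
      exact congrArg Sum.inr (Fin.ext (by omega))
  · intro i
    have hi : i.1 < m := i.isLt
    show ((B (i.1+1) : ℕ) : ZMod (2*m)) - ((A (i.1+1) : ℕ) : ZMod (2*m)) = _
    rcases hdiff (i.1+1) (by omega) (by omega) with h | h
    · rw [h]; push_cast; ring
    · have hc := congrArg (fun t : ℕ => (t : ZMod (2*m))) h
      simp only [Nat.cast_add] at hc
      rw [ZMod.natCast_self, add_zero] at hc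
      rw [hc]
      push_cast
      ring

private lemma zmod_sum (n : ℕ) [NeZero n] :
    (∑ x : ZMod n, x) = ((∑ j ∈ Finset.range n, j : ℕ) : ZMod n) := by
  have hbij : Function.Bijective (fun i : Fin n => ((i.1 : ℕ) : ZMod n)) := by
    rw [Fintype.bijective_iff_injective_and_card]
    refine ⟨?_, by simp [ZMod.card]⟩
    intro x y hxy
    have h2 := congrArg ZMod.val hxy
    rw [ZMod.val_cast_of_lt x.isLt, ZMod.val_cast_of_lt y.isLt] at h2
    exact Fin.ext h2
  rw [Nat.cast_sum, ← Fin.sum_univ_eq_sum_range (fun j => ((j : ℕ) : ZMod n)) n]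
  exact (Fintype.sum_bijective _ hbij _ (fun y => y) (fun x => rfl)).symm

theorem skolemCircle_exists_iff (m : ℕ) :
    (∃ a b : Fin m → ZMod (2 * m), IsSkolemCircle m a b) ↔ m % 4 = 0 ∨ m % 4 = 1 := by
  constructor
  · rintro ⟨a, b, hinj, hdiff⟩
    by_contra hcon
    push_neg at hcon
    have hm4 : m % 4 = 2 ∨ m % 4 = 3 := by omega
    have hm : 1 ≤ m := by omega
    haveI : NeZero (2*m) := ⟨by omega⟩
    have hbij : Function.Bijective (Sum.elim a b) := by
      rw [Fintype.bijective_iff_injective_and_card]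
      refine ⟨hinj, ?_⟩
      simp only [Fintype.card_sum, Fintype.card_fin, ZMod.card]
      omega
    have hsum1 : (∑ s, Sum.elim a b s) = ∑ x : ZMod (2*m), x :=
      Fintype.sum_bijective _ hbij _ (fun y => y) (fun x => rfl)
    rw [Fintype.sum_sum_type] at hsum1
    simp only [Sum.elim_inl, Sum.elim_inr] at hsum1
    set SA := ∑ i, a i with hSA
    set SB := ∑ i, b i with hSB
    set S : ℕ := ∑ j ∈ Finset.range (2*m), j with hSdef
    set C : ℕ := ∑ j ∈ Finset.range m, (j+1) with hCdef
    have hsum2 : SB - SA = ((C : ℕ) : ZMod (2*m)) := by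
      rw [← Finset.sum_sub_distrib, hCdef, Nat.cast_sum,
        ← Fin.sum_univ_eq_sum_range (fun j => (((j+1 : ℕ)) : ZMod (2*m))) m]
      refine Finset.sum_congr rfl (fun i _ => ?_)
      simpa using hdiff i
    have hS : ((S : ℕ) : ZMod (2*m)) = SA + SB := by
      rw [hSdef, ← zmod_sum]; exact hsum1.symm
    have hSC : ((S + C : ℕ) : ZMod (2*m)) = SB + SB := by
      push_cast
      linear_combination hS - hsum2
    have hevenval : ((S + C : ℕ) : ZMod (2*m)).val % 2 = 0 := by
      rw [hSC, ZMod.val_add, Nat.mod_mod_of_dvd _ ⟨m, rfl⟩]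
      omega
    rw [ZMod.val_natCast, Nat.mod_mod_of_dvd _ ⟨m, rfl⟩] at hevenval
    have hS2 : S * 2 = (2*m) * (2*m - 1) := Finset.sum_range_id_mul_two (2*m)
    have hC2 : C * 2 = m * (m-1) + 2*m := by
      have h1 : (∑ j ∈ Finset.range m, j) * 2 = m * (m-1) := Finset.sum_range_id_mul_two m
      have h2 : C = (∑ j ∈ Finset.range m, j) + m := by
        rw [hCdef, Finset.sum_add_distrib, Finset.sum_const, Finset.card_range,
          smul_eq_mul, mul_one]
      omega
    rcases hm4 with hm4 | hm4
    · obtain ⟨q, rfl⟩ : ∃ q, m = 4*q+2 := ⟨m/4, by omega⟩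
      have e1 : S * 2 = 64*(q*q) + 56*q + 12 := by
        rw [hS2, show 2*(4*q+2) - 1 = 8*q+3 from by omega]; ring
      have e2 : C * 2 = 16*(q*q) + 20*q + 6 := by
        rw [hC2, show (4*q+2) - 1 = 4*q+1 from by omega]; ring
      obtain ⟨t, ht⟩ : ∃ t, q*q = t := ⟨_, rfl⟩
      rw [ht] at e1 e2
      omega
    · obtain ⟨q, rfl⟩ : ∃ q, m = 4*q+3 := ⟨m/4, by omega⟩
      have e1 : S * 2 = 64*(q*q) + 88*q + 30 := by
        rw [hS2, show 2*(4*q+3) - 1 = 8*q+5 from by omega]; ring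
      have e2 : C * 2 = 16*(q*q) + 28*q + 12 := by
        rw [hC2, show (4*q+3) - 1 = 4*q+2 from by omega]; ring
      obtain ⟨t, ht⟩ : ∃ t, q*q = t := ⟨_, rfl⟩
      rw [ht] at e1 e2
      omega
  · intro h
    rcases Nat.eq_zero_or_pos m with rfl | hm
    · refine ⟨fun i => i.elim0, fun i => i.elim0, ?_, fun i => i.elim0⟩
      rintro (i | i) <;> exact i.elim0
    rcases h with h | h
    · obtain ⟨k, rfl⟩ : ∃ k, m = 4*k := ⟨m/4, by omega⟩
      exact skolem_of_tables (4*k) (evA k) (evB k)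
        (fun d h1 h2 => by have := evA_lt k d h1 (by omega); omega)
        (fun d h1 h2 => by have := evB_lt k d h1 (by omega); omega)
        (fun d h1 h2 => by
          rcases ev_diff k d h1 (by omega) with h' | h'
          · exact Or.inl h'
          · exact Or.inr (by omega))
        (fun d e h1 h2 h3 h4 => evA_inj k d e h1 (by omega) h3 (by omega))
        (fun d e h1 h2 h3 h4 => evB_inj k d e h1 (by omega) h3 (by omega))
        (fun d e h1 h2 h3 h4 => evAB k d e h1 (by omega) h3 (by omega))
        (by omega)
    · obtain ⟨k, rfl⟩ : ∃ k, m = 4*k+1 := ⟨m/4, by omega⟩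
      exact skolem_of_tables (4*k+1) (odA k) (odB k)
        (fun d h1 h2 => by have := odA_lt k d h1 (by omega); omega)
        (fun d h1 h2 => by have := odB_lt k d h1 (by omega); omega)
        (fun d h1 h2 => by
          rcases od_diff k d h1 (by omega) with h' | h'
          · exact Or.inl h'
          · exact Or.inr (by omega))
        (fun d e h1 h2 h3 h4 => odA_inj k d e h1 (by omega) h3 (by omega))
        (fun d e h1 h2 h3 h4 => odB_inj k d e h1 (by omega) h3 (by omega))
        (fun d e h1 h2 h3 h4 => odAB k d e h1 (by omega) h3 (by omega))
        (by omega)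
end

section
/- If m ∈ {2, 3, 6, 7} (mod 4 residue 2 or 3), i.e., m ≡ 2 or 3 (mod 4), then no Skolem circle of order m exists. -/
lemma sum_zmod {n : ℕ} [NeZero n] {M : Type*} [AddCommMonoid M] (f : ZMod n → M) :
    ∑ x : ZMod n, f x = ∑ i ∈ Finset.range n, f i := by
  refine Finset.sum_bij' (fun (x : ZMod n) (_ : x ∈ Finset.univ) => x.val)
    (fun (i : ℕ) (_ : i ∈ Finset.range n) => (i : ZMod n)) ?_ ?_ ?_ ?_ ?_
  · intro x _; exact Finset.mem_range.mpr (ZMod.val_lt x)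
  · intro i hi; exact Finset.mem_univ _
  · intro x _; exact ZMod.natCast_rightInverse x
  · intro i hi; exact ZMod.val_cast_of_lt (Finset.mem_range.mp hi)
  · intro x _; rw [ZMod.natCast_rightInverse x]

theorem no_skolemCircle_of_mod_four (m : ℕ) (h : m % 4 = 2 ∨ m % 4 = 3) :
    ¬ ∃ a b : Fin m → ZMod (2 * m), IsSkolemCircle m a b := by
  rintro ⟨a, b, hinj, hdiff⟩
  have hm : 0 < m := by omega
  haveI : NeZero (2 * m) := ⟨by omega⟩
  -- f is bijective
  have hcard : Fintype.card (Fin m ⊕ Fin m) = Fintype.card (ZMod (2 * m)) := by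
    simp [ZMod.card, two_mul]
  have hbij : Function.Bijective (Sum.elim a b) :=
    (Fintype.bijective_iff_injective_and_card _).mpr ⟨hinj, hcard⟩
  -- map everything to ZMod 2
  let g : ZMod (2 * m) →+* ZMod 2 := ZMod.castHom ⟨m, rfl⟩ (ZMod 2)
  have hsum : ∑ x : ZMod (2 * m), g x = ∑ s : Fin m ⊕ Fin m, g (Sum.elim a b s) :=
    (Fintype.sum_bijective _ hbij _ _ (fun s => rfl)).symm
  rw [sum_zmod, Fintype.sum_sum_type] at hsum
  simp only [Sum.elim_inl, Sum.elim_inr] at hsum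
  -- LHS equals (m(2m-1) : ZMod 2)
  have hL : ∑ i ∈ Finset.range (2 * m), (g i : ZMod 2) = ((∑ i ∈ Finset.range (2 * m), i : ℕ) : ZMod 2) := by
    rw [Nat.cast_sum]
    exact Finset.sum_congr rfl fun i _ => map_natCast g i
  -- the difference sum
  have hd : ∑ i : Fin m, (g (b i) - g (a i)) = ((∑ i ∈ Finset.range m, (i + 1) : ℕ) : ZMod 2) := by
    rw [Nat.cast_sum]
    push_cast
    rw [← Fin.sum_univ_eq_sum_range (fun i => ((i : ZMod 2) + 1))]
    refine Finset.sum_congr rfl fun i _ => ?_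
    rw [← map_sub, hdiff i, map_natCast]
    push_cast
    ring
  -- in ZMod 2, x - y = x + y
  have hchar : ∀ x y : ZMod 2, x - y = x + y := by decide
  have hd' : ∑ i : Fin m, (g (b i) - g (a i)) = ∑ i : Fin m, g (a i) + ∑ i : Fin m, g (b i) := by
    simp_rw [hchar]
    rw [Finset.sum_add_distrib, add_comm]
  -- combine
  set S : ℕ := ∑ i ∈ Finset.range m, (i + 1) with hS
  set T : ℕ := ∑ i ∈ Finset.range (2 * m), i with hT
  have key : (T : ZMod 2) = (S : ZMod 2) := by
    rw [← hL, hsum, ← hd, hd']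
  have hmod : T % 2 = S % 2 := by
    have := (ZMod.natCast_eq_natCast_iff _ _ _).mp key
    exact this
  -- compute T and S as naturals
  have hT2 : 2 * T = 2 * m * (2 * m - 1) := by
    rw [hT, ← Finset.sum_range_id_mul_two (2 * m)]; ring
  have hS2 : 2 * S = m * (m + 1) := by
    have : S = (∑ i ∈ Finset.range m, i) + m := by
      rw [hS, Finset.sum_add_distrib, Finset.sum_const, Finset.card_range, smul_eq_mul, mul_one]
    rw [this]
    obtain ⟨n, rfl⟩ : ∃ n, m = n + 1 := ⟨m - 1, by omega⟩
    have h2 := Finset.sum_range_id_mul_two (n + 1)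
    simp only [Nat.add_sub_cancel] at h2
    nlinarith [h2]
  rcases h with h2 | h3
  · obtain ⟨k, hk⟩ : ∃ k, m = 4 * k + 2 := ⟨m / 4, by omega⟩
    subst hk
    have e1 : T = (4 * k + 2) * (8 * k + 3) := by
      have h' : 2 * ((4 * k + 2) * (8 * k + 3)) = 2 * (4 * k + 2) * (2 * (4 * k + 2) - 1) := by
        have h'' : (2 : ℕ) * (4 * k + 2) - 1 = 8 * k + 3 := by omega
        rw [h'']; ring
      omega
    have e2 : S = (2 * k + 1) * (4 * k + 3) := by
      have h' : 2 * ((2 * k + 1) * (4 * k + 3)) = (4 * k + 2) * ((4 * k + 2) + 1) := by ring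
      omega
    have hTe : T % 2 = 0 := by
      rw [e1]
      have h' : (4 * k + 2) * (8 * k + 3) = 2 * ((2 * k + 1) * (8 * k + 3)) := by ring
      omega
    have hSo : S % 2 = 1 := by
      rw [e2]
      have h' : (2 * k + 1) * (4 * k + 3) = 2 * (4 * k * k + 5 * k + 1) + 1 := by ring
      omega
    omega
  · obtain ⟨k, hk⟩ : ∃ k, m = 4 * k + 3 := ⟨m / 4, by omega⟩
    subst hk
    have e1 : T = (4 * k + 3) * (8 * k + 5) := by
      have h' : 2 * ((4 * k + 3) * (8 * k + 5)) = 2 * (4 * k + 3) * (2 * (4 * k + 3) - 1) := by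
        have h'' : (2 : ℕ) * (4 * k + 3) - 1 = 8 * k + 5 := by omega
        rw [h'']; ring
      omega
    have e2 : S = (4 * k + 3) * (2 * k + 2) := by
      have h' : 2 * ((4 * k + 3) * (2 * k + 2)) = (4 * k + 3) * ((4 * k + 3) + 1) := by ring
      omega
    have hTo : T % 2 = 1 := by
      rw [e1]
      have h' : (4 * k + 3) * (8 * k + 5) = 2 * (16 * k * k + 22 * k + 7) + 1 := by ring
      omega
    have hSe : S % 2 = 0 := by
      rw [e2]
      have h' : (4 * k + 3) * (2 * k + 2) = 2 * ((4 * k + 3) * (k + 1)) := by ring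
      omega
    omega
end

section
/- If S_1, …, S_j are Skolem-type sequences over pairwise disjoint symbol sets X_1, …, X_j whose union is {1,…,m}, then the concatenation of S_1,…,S_j wrapped around a cycle of length 2m is a Skolem circle of order m (moreover a j-edge-removable one). -/
section aux

variable {j : ℕ} (L : Fin j → List ℕ)

/-- offset of block `n` inside the concatenation -/
private def offFn (n : ℕ) : ℕ := (((List.ofFn L).take n).flatten).length

private lemma flatten_split (k : Fin j) :
    (List.ofFn L).flatten =
      ((List.ofFn L).take k.val).flatten ++ L k ++ ((List.ofFn L).drop (k.val+1)).flatten := by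
  have hk : k.val < (List.ofFn L).length := by simp [k.isLt]
  conv_lhs => rw [← List.take_append_drop k.val (List.ofFn L),
    List.drop_eq_getElem_cons hk]
  rw [List.flatten_append, List.flatten_cons, List.getElem_ofFn, Fin.eta, List.append_assoc]

private lemma off_step (k : Fin j) :
    offFn L (k.val+1) = offFn L k.val + (L k).length := by
  have hk : k.val < (List.ofFn L).length := by simp [k.isLt]
  unfold offFn
  rw [List.take_succ, List.getElem?_eq_getElem hk, List.getElem_ofFn, Fin.eta]
  simp

private lemma off_mono {a b : ℕ} (hab : a ≤ b) : offFn L a ≤ offFn L b := by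
  have hb : b = a + (b - a) := by omega
  unfold offFn
  rw [hb, List.take_add, List.flatten_append, List.length_append]
  omega

private lemma mem_take_flatten {k : ℕ} {y : ℕ} (hy : y ∈ ((List.ofFn L).take k).flatten) :
    ∃ l : Fin j, l.val < k ∧ y ∈ L l := by
  obtain ⟨t, ht, hyt⟩ := List.mem_flatten.mp hy
  obtain ⟨i, hi, hit⟩ := List.mem_iff_getElem.mp ht
  have hi' : i < k ∧ i < j := by
    have := hi; simp [List.length_take] at this; omega
  refine ⟨⟨i, hi'.2⟩, hi'.1, ?_⟩
  rw [List.getElem_take, List.getElem_ofFn] at hit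
  rwa [← hit] at hyt

private lemma mem_drop_flatten {k : ℕ} {y : ℕ} (hy : y ∈ ((List.ofFn L).drop k).flatten) :
    ∃ l : Fin j, k ≤ l.val ∧ y ∈ L l := by
  obtain ⟨t, ht, hyt⟩ := List.mem_flatten.mp hy
  obtain ⟨i, hi, hit⟩ := List.mem_iff_getElem.mp ht
  have hi' : k + i < j := by
    have := hi; simp [List.length_drop] at this; omega
  refine ⟨⟨k + i, hi'⟩, Nat.le_add_right _ _, ?_⟩
  rw [List.getElem_drop, List.getElem_ofFn] at hit
  rwa [← hit] at hyt

private lemma getD_flatten (k : Fin j) {p : ℕ} (hp : p < (L k).length) :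
    ((List.ofFn L).flatten).getD (offFn L k.val + p) 0 = (L k).getD p 0 := by
  rw [flatten_split L k, List.append_assoc]
  rw [List.getD_append_right _ _ _ _ (by simp [offFn])]
  rw [show offFn L k.val + p - (((List.ofFn L).take k.val).flatten).length = p from by
    simp [offFn]]
  exact List.getD_append _ _ _ _ hp

private lemma block_locate (X : Fin j → Finset ℕ)
    (hXmem : ∀ k : Fin j, ∀ y ∈ L k, y ∈ X k)
    (hdisj : ∀ k l : Fin j, k ≠ l → Disjoint (X k) (X l))
    (k : Fin j) {x i : ℕ} (hx : x ∈ X k)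
    (hi : i < ((List.ofFn L).flatten).length)
    (hgd : ((List.ofFn L).flatten).getD i 0 = x) :
    offFn L k.val ≤ i ∧ i < offFn L k.val + (L k).length := by
  set P := ((List.ofFn L).take k.val).flatten with hP
  set S := ((List.ofFn L).drop (k.val+1)).flatten with hS
  have hsplit : (List.ofFn L).flatten = P ++ L k ++ S := flatten_split L k
  have hPlen : P.length = offFn L k.val := rfl
  constructor
  · by_contra h
    have hlt : i < P.length := by omega
    have hgd' : P.getD i 0 = x := by
      rw [hsplit, List.append_assoc, List.getD_append _ _ _ _ hlt] at hgd
      exact hgd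
    have hmem : x ∈ P := by
      rw [← hgd', List.getD_eq_getElem _ _ hlt]; exact List.getElem_mem hlt
    obtain ⟨l, hlk, hxl⟩ := mem_take_flatten L hmem
    have hne : l ≠ k := by intro he; rw [he] at hlk; omega
    exact absurd hx (Finset.disjoint_left.mp (hdisj l k hne) (hXmem l x hxl))
  · by_contra h
    have hge : (P ++ L k).length ≤ i := by
      rw [List.length_append, hPlen]; omega
    have hgd' : S.getD (i - (P ++ L k).length) 0 = x := by
      rw [hsplit, List.getD_append_right _ _ _ _ hge] at hgd
      exact hgd
    have hilt : i - (P ++ L k).length < S.length := by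
      rw [hsplit, List.length_append] at hi
      omega
    have hmem : x ∈ S := by
      rw [← hgd', List.getD_eq_getElem _ _ hilt]; exact List.getElem_mem hilt
    obtain ⟨l, hlk, hxl⟩ := mem_drop_flatten L hmem
    have hne : l ≠ k := by intro he; rw [he] at hlk; omega
    exact absurd hx (Finset.disjoint_left.mp (hdisj l k hne) (hXmem l x hxl))

end aux

/-- A weak Skolem labeling of the cycle on `2m` vertices (a Skolem circle, in
labeling form): each symbol `x ∈ {1,…,m}` labels exactly two vertices, at
cyclic distance `x`. -/
def IsSkolemCircleLabel (m : ℕ) (f : ZMod (2 * m) → ℕ) : Prop :=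
  ∀ x ∈ Finset.Icc 1 m, ∃ v : ZMod (2 * m),
    f v = x ∧ f (v + (x : ZMod (2 * m))) = x ∧
    ∀ w : ZMod (2 * m), f w = x → w = v ∨ w = v + (x : ZMod (2 * m))

/-- The edge of the `2m`-cycle between positions `e` and `e+1` is removable:
cutting the circle there yields a valid linear Skolem sequence, i.e. every
symbol pair lies within the resulting linear order. -/
def RemovableEdge (m : ℕ) (f : ZMod (2 * m) → ℕ) (e : ZMod (2 * m)) : Prop :=
  ∀ x ∈ Finset.Icc 1 m, ∃ k : ℕ, 1 ≤ k ∧ k + x ≤ 2 * m ∧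
    f (e + (k : ZMod (2 * m))) = x ∧ f (e + ((k + x : ℕ) : ZMod (2 * m))) = x

/-- A Skolem-type sequence (as a list) over the symbol set `X`: length `2|X|`,
all entries in `X`, and each `x ∈ X` appears at exactly two positions, which
differ by exactly `x`. -/
def IsSkolemTypeList (X : Finset ℕ) (L : List ℕ) : Prop :=
  L.length = 2 * X.card ∧ (∀ y ∈ L, y ∈ X) ∧
  ∀ x ∈ X, ∃ p q : ℕ, p + x = q ∧ q < L.length ∧
    L.getD p 0 = x ∧ L.getD q 0 = x ∧
    ∀ r < L.length, L.getD r 0 = x → r = p ∨ r = q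

/-- Gluing lemma: concatenating Skolem-type sequences over pairwise disjoint
symbol sets whose union is `{1,…,m}`, and wrapping around the `2m`-cycle, gives
a Skolem circle which is `j`-edge-removable. -/
theorem skolemCircle_of_concat (m j : ℕ) (hm : 1 ≤ m)
    (L : Fin j → List ℕ) (X : Fin j → Finset ℕ)
    (hX : ∀ k, (X k).Nonempty)
    (hL : ∀ k, IsSkolemTypeList (X k) (L k))
    (hdisj : ∀ k l : Fin j, k ≠ l → Disjoint (X k) (X l))
    (hunion : (Finset.univ : Finset (Fin j)).biUnion X = Finset.Icc 1 m)
    (f : ZMod (2 * m) → ℕ)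
    (hf : ∀ i : ℕ, i < ((List.ofFn L).flatten).length →
      f ((i : ℕ) : ZMod (2 * m)) = ((List.ofFn L).flatten).getD i 0) :
    IsSkolemCircleLabel m f ∧ j ≤ {e : ZMod (2 * m) | RemovableEdge m f e}.ncard := by
  simp only [IsSkolemTypeList] at hL
  classical
  haveI : NeZero (2*m) := ⟨by omega⟩
  have hXmem : ∀ k : Fin j, ∀ y ∈ L k, y ∈ X k := fun k => (hL k).2.1
  have hFlen : ((List.ofFn L).flatten).length = 2*m := by
    rw [List.length_flatten, List.map_ofFn, List.sum_ofFn]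
    have h3 : ∑ k : Fin j, (X k).card = (Finset.univ.biUnion X).card :=
      (Finset.card_biUnion (fun a _ b _ h => hdisj a b h)).symm
    calc (∑ k : Fin j, (List.length ∘ L) k) = ∑ k : Fin j, 2 * (X k).card :=
          Finset.sum_congr rfl fun k _ => (hL k).1
      _ = 2 * ∑ k : Fin j, (X k).card := by rw [Finset.mul_sum]
      _ = 2 * m := by rw [h3, hunion, Nat.card_Icc]; omega
  have hofflen : ∀ k : Fin j, offFn L k.val + (L k).length ≤ 2*m := by
    intro k
    have h := congrArg List.length (flatten_split L k)
    simp only [List.length_append] at h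
    rw [hFlen] at h
    have hPlen : offFn L k.val = (((List.ofFn L).take k.val).flatten).length := rfl
    omega
  have hval : ∀ g : ℕ, g < 2*m → f ((g : ℕ) : ZMod (2*m)) = ((List.ofFn L).flatten).getD g 0 :=
    fun g hg => hf g (by rw [hFlen]; exact hg)
  have part1 : ∀ x ∈ Finset.Icc 1 m, ∃ v : ZMod (2 * m),
      f v = x ∧ f (v + (x : ZMod (2 * m))) = x ∧
      ∀ w : ZMod (2 * m), f w = x → w = v ∨ w = v + (x : ZMod (2 * m)) := by
    intro x hx
    have hx' : x ∈ Finset.univ.biUnion X := by rw [hunion]; exact hx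
    obtain ⟨k, -, hxk⟩ := Finset.mem_biUnion.mp hx'
    obtain ⟨p, q, hpq, hqlt, hp, hq, huniq⟩ := (hL k).2.2 x hxk
    have hx1 : 1 ≤ x := (Finset.mem_Icc.mp hx).1
    have hplt : p < (L k).length := by omega
    have hoq : offFn L k.val + q < 2*m := by have := hofflen k; omega
    have hvx : ((offFn L k.val + p : ℕ) : ZMod (2*m)) + (x : ZMod (2*m))
        = ((offFn L k.val + q : ℕ) : ZMod (2*m)) := by
      rw [← hpq]; push_cast; ring
    refine ⟨((offFn L k.val + p : ℕ) : ZMod (2*m)), ?_, ?_, ?_⟩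
    · rw [hval _ (by omega), getD_flatten L k hplt, hp]
    · rw [hvx, hval _ hoq, getD_flatten L k hqlt, hq]
    · intro w hw
      have hwlt : w.val < 2*m := ZMod.val_lt w
      have hwe : ((w.val : ℕ) : ZMod (2*m)) = w := by
        rw [ZMod.natCast_val, ZMod.cast_id]
      have hwd : ((List.ofFn L).flatten).getD w.val 0 = x := by
        rw [← hval _ hwlt, hwe, hw]
      obtain ⟨h1, h2⟩ := block_locate L X hXmem hdisj k hxk (by rw [hFlen]; exact hwlt) hwd
      have hr : (L k).getD (w.val - offFn L k.val) 0 = x := by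
        rw [← getD_flatten L k (show w.val - offFn L k.val < (L k).length by omega),
          show offFn L k.val + (w.val - offFn L k.val) = w.val from by omega]
        exact hwd
      rcases huniq _ (by omega) hr with h | h
      · left; rw [← hwe]; congr 1; omega
      · right; rw [hvx, ← hwe]; congr 1; omega
  -- part 2
  have hstrict : ∀ k l : Fin j, k.val < l.val →
      offFn L k.val + (L k).length ≤ offFn L l.val := by
    intro k l hkl
    calc offFn L k.val + (L k).length = offFn L (k.val + 1) := (off_step L k).symm
      _ ≤ offFn L l.val := off_mono L (by omega)
  have hlenpos : ∀ k : Fin j, 1 ≤ (L k).length := by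
    intro k
    have := Finset.card_pos.mpr (hX k)
    rw [(hL k).1]; omega
  have hofflt : ∀ k : Fin j, offFn L k.val < 2*m := by
    intro k; have := hofflen k; have := hlenpos k; omega
  have h0 : (2*(m : ZMod (2*m))) = 0 := by
    have := ZMod.natCast_self (2*m); push_cast at this; exact this
  set E : Fin j → ZMod (2*m) := fun l => ((offFn L l.val : ℕ) : ZMod (2*m)) - 1 with hE
  have key1 : ∀ (l : Fin j) (a : ℕ), offFn L l.val ≤ a →
      E l + ((a + 1 - offFn L l.val : ℕ) : ZMod (2*m)) = ((a : ℕ) : ZMod (2*m)) := by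
    intro l a ha
    simp only [hE]
    rw [Nat.cast_sub (by omega)]
    push_cast; ring
  have key2 : ∀ (l : Fin j) (a : ℕ), a < offFn L l.val →
      E l + ((a + 2*m + 1 - offFn L l.val : ℕ) : ZMod (2*m)) = ((a : ℕ) : ZMod (2*m)) := by
    intro l a ha
    simp only [hE]
    rw [Nat.cast_sub (by have := hofflt l; omega)]
    push_cast
    linear_combination h0
  have hErem : ∀ l : Fin j, ∀ x ∈ Finset.Icc 1 m, ∃ kk : ℕ, 1 ≤ kk ∧ kk + x ≤ 2 * m ∧
      f (E l + (kk : ZMod (2 * m))) = x ∧ f (E l + ((kk + x : ℕ) : ZMod (2 * m))) = x := by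
    intro l x hx
    have hx' : x ∈ Finset.univ.biUnion X := by rw [hunion]; exact hx
    obtain ⟨k, -, hxk⟩ := Finset.mem_biUnion.mp hx'
    obtain ⟨p, q, hpq, hqlt, hp, hq, -⟩ := (hL k).2.2 x hxk
    have hx1 : 1 ≤ x := (Finset.mem_Icc.mp hx).1
    have hplt : p < (L k).length := by omega
    have hoq : offFn L k.val + q < 2*m := by have := hofflen k; omega
    by_cases hcase : offFn L l.val ≤ offFn L k.val + p
    · refine ⟨offFn L k.val + p + 1 - offFn L l.val, by omega, by omega, ?_, ?_⟩
      · rw [key1 l (offFn L k.val + p) hcase, hval _ (by omega), getD_flatten L k hplt, hp]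
      · rw [show offFn L k.val + p + 1 - offFn L l.val + x
              = offFn L k.val + q + 1 - offFn L l.val from by omega,
          key1 l (offFn L k.val + q) (by omega), hval _ hoq, getD_flatten L k hqlt, hq]
    · push_neg at hcase
      have hkl : k.val < l.val := by
        by_contra h
        have := off_mono L (show l.val ≤ k.val from by omega)
        omega
      have hupper : offFn L k.val + (L k).length ≤ offFn L l.val := hstrict k l hkl
      have hql : offFn L k.val + q < offFn L l.val := by omega
      have holm : offFn L l.val < 2*m := hofflt l
      refine ⟨offFn L k.val + p + 2*m + 1 - offFn L l.val, by omega, by omega, ?_, ?_⟩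
      · rw [key2 l (offFn L k.val + p) (by omega), hval _ (by omega),
          getD_flatten L k hplt, hp]
      · rw [show offFn L k.val + p + 2*m + 1 - offFn L l.val + x
              = offFn L k.val + q + 2*m + 1 - offFn L l.val from by omega,
          key2 l (offFn L k.val + q) hql, hval _ hoq, getD_flatten L k hqlt, hq]
  have hEinj : Function.Injective E := by
    intro a b hab
    simp only [hE] at hab
    have h1 : ((offFn L a.val : ℕ) : ZMod (2*m)) = ((offFn L b.val : ℕ) : ZMod (2*m)) := by
      have := congrArg (· + 1) hab; simpa using this
    have h2 : offFn L a.val = offFn L b.val := by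
      have := congrArg ZMod.val h1
      rwa [ZMod.val_cast_of_lt (hofflt a), ZMod.val_cast_of_lt (hofflt b)] at this
    by_contra hne
    rcases Nat.lt_or_ge a.val b.val with h | h
    · have := hstrict a b h; have := hlenpos a; omega
    · have hba : b.val < a.val := by
        rcases Nat.lt_or_ge b.val a.val with h' | h'
        · exact h'
        · exact absurd (Fin.ext (by omega)) hne
      have := hstrict b a hba; have := hlenpos b; omega
  refine ⟨part1, ?_⟩
  have hinj2 : Function.Injective
      (fun l : Fin j => (⟨E l, hErem l⟩ : {e : ZMod (2*m) | RemovableEdge m f e})) := by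
    intro a b hab
    exact hEinj (congrArg Subtype.val hab)
  calc j = Nat.card (Fin j) := by simp
    _ ≤ Nat.card {e : ZMod (2*m) | RemovableEdge m f e} :=
        Nat.card_le_card_of_injective _ hinj2
    _ = ({e : ZMod (2*m) | RemovableEdge m f e}).ncard := Nat.card_coe_set_eq _
end

section
/- Any Skolem circle of order m ≥ 2 has at most 2 + log₂(m) removable edges; in particular the number of removable edges of a Skolem circle of order m is O(log m). -/
/-- Abstract greedy/halving argument: gaps `g` over a finite set `E` of cuts,
summing to `2m`, each positive, satisfying the key threshold inequality,
force `2^(|E|-1) ≤ 2m`. -/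
lemma skolem_greedy_aux {α : Type*} [DecidableEq α] (m : ℕ) (E : Finset α) (g : α → ℕ)
    (hsum : ∑ e ∈ E, g e = 2 * m)
    (hpos : ∀ e ∈ E, 1 ≤ g e)
    (hkey : ∀ s : ℕ, 1 ≤ s → ∀ S ⊆ E, (∀ e ∈ E \ S, g e ≤ s) →
      2 * m ≤ 2 * s + ∑ e ∈ S, g e)
    (ht : 1 ≤ E.card) : 2 ^ (E.card - 1) ≤ 2 * m := by
  have main : ∀ i, i ≤ E.card - 1 → ∃ S ⊆ E, S.card = i ∧
      2 ^ i * (2 * m) ≤ 2 ^ i * (∑ e ∈ S, g e) + 2 * m := by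
    intro i
    induction i with
    | zero => intro _; exact ⟨∅, by simp⟩
    | succ i ih =>
      intro hi
      obtain ⟨S, hSE, hScard, hS⟩ := ih (by omega)
      have hne : (E \ S).Nonempty := by
        rw [Finset.sdiff_nonempty]
        intro h
        have := Finset.card_le_card h
        omega
      obtain ⟨e₀, he₀, hmax⟩ := Finset.exists_max_image (E \ S) g hne
      have he₀E : e₀ ∈ E := (Finset.mem_sdiff.mp he₀).1
      have he₀S : e₀ ∉ S := (Finset.mem_sdiff.mp he₀).2
      have hk := hkey (g e₀) (hpos e₀ he₀E) S hSE (fun e he => hmax e he)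
      refine ⟨insert e₀ S, Finset.insert_subset he₀E hSE, ?_, ?_⟩
      · rw [Finset.card_insert_of_notMem he₀S, hScard]
      · rw [Finset.sum_insert he₀S]
        have h2 : 2 ^ i * (2 * m) ≤ 2 ^ i * (2 * g e₀ + ∑ e ∈ S, g e) :=
          Nat.mul_le_mul_left _ hk
        have hexp : (2:ℕ) ^ (i+1) = 2 * 2 ^ i := by ring
        rw [hexp]
        nlinarith [hS, h2]
  obtain ⟨S, hSE, hScard, hS⟩ := main (E.card - 1) le_rfl
  have hcard1 : (E \ S).card = 1 := by
    rw [Finset.card_sdiff_of_subset hSE, hScard]; omega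
  obtain ⟨e₀, he₀⟩ := Finset.card_eq_one.mp hcard1
  have he₀E : e₀ ∈ E := by
    have : e₀ ∈ E \ S := by rw [he₀]; exact Finset.mem_singleton_self _
    exact (Finset.mem_sdiff.mp this).1
  have hsplit : ∑ e ∈ S, g e + g e₀ = 2 * m := by
    rw [← hsum, ← Finset.sum_sdiff hSE, he₀, Finset.sum_singleton]; ring
  have hge : 1 ≤ g e₀ := hpos e₀ he₀E
  have hmul : 2 ^ (E.card - 1) * (∑ e ∈ S, g e) + 2 ^ (E.card - 1) * g e₀
      = 2 ^ (E.card - 1) * (2 * m) := by rw [← Nat.mul_add, hsplit]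
  have hle : 2 ^ (E.card - 1) ≤ 2 ^ (E.card - 1) * g e₀ :=
    Nat.le_mul_of_pos_right _ hge
  omega

/-- Distance (backwards, counting vertices) from `w` to the nearest cut in `E`:
the minimum over `e ∈ E` of `(w - 1 - e).val`; equals `0` iff `w` is just after a cut. -/
noncomputable def skDmin (m : ℕ) (E : Finset (ZMod (2*m))) (hne : E.Nonempty)
    (w : ZMod (2*m)) : ℕ :=
  (E.image (fun e => (w - 1 - e).val)).min' (hne.image _)

/-- The cut immediately (weakly) preceding `w`. -/
noncomputable def skPrev (m : ℕ) (E : Finset (ZMod (2*m))) (hne : E.Nonempty)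
    (w : ZMod (2*m)) : ZMod (2*m) :=
  w - 1 - ((skDmin m E hne w : ℕ) : ZMod (2*m))

lemma skDmin_le (m : ℕ) (E : Finset (ZMod (2*m))) (hne : E.Nonempty)
    (w : ZMod (2*m)) {e : ZMod (2*m)} (he : e ∈ E) :
    skDmin m E hne w ≤ (w - 1 - e).val :=
  Finset.min'_le _ _ (Finset.mem_image_of_mem _ he)

lemma skDmin_ex (m : ℕ) [NeZero (2*m)] (E : Finset (ZMod (2*m))) (hne : E.Nonempty)
    (w : ZMod (2*m)) :
    ∃ e ∈ E, (w - 1 - e).val = skDmin m E hne w ∧ skPrev m E hne w = e := by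
  obtain ⟨e, he, hval⟩ := Finset.mem_image.mp
    (Finset.min'_mem (E.image (fun e => (w - 1 - e).val)) (hne.image _))
  refine ⟨e, he, hval, ?_⟩
  have h2 : skDmin m E hne w = (w - 1 - e).val := hval.symm
  unfold skPrev
  rw [h2, ZMod.natCast_val, ZMod.cast_id]
  ring

lemma skPrev_mem (m : ℕ) [NeZero (2*m)] (E : Finset (ZMod (2*m))) (hne : E.Nonempty)
    (w : ZMod (2*m)) : skPrev m E hne w ∈ E := by
  obtain ⟨e, he, _, hpe⟩ := skDmin_ex m E hne w
  rw [hpe]; exact he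

/-- The geometric core: if every element of `E` is a removable edge of a Skolem
circle of order `m ≥ 2` and `E` is nonempty, then `2^(|E|-1) ≤ 2m`. -/
lemma skolem_key_bound (m : ℕ) (hm : 2 ≤ m) (f : ZMod (2*m) → ℕ)
    (hf : IsSkolemCircleLabel m f) (E : Finset (ZMod (2*m)))
    (hE : ∀ e ∈ E, RemovableEdge m f e) (htE : 1 ≤ E.card) :
    2 ^ (E.card - 1) ≤ 2 * m := by
  classical
  haveI : NeZero (2*m) := ⟨by omega⟩
  haveI : Fact (1 < 2*m) := ⟨by omega⟩
  choose! v hv1 hv2 hv3 using hf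
  have hcast_ne : ∀ x : ℕ, 1 ≤ x → x < 2*m → (x : ZMod (2*m)) ≠ 0 := by
    intro x h1 h2 h0
    rw [ZMod.natCast_eq_zero_iff] at h0
    exact absurd (Nat.le_of_dvd (by omega) h0) (by omega)
  -- Blocking: a removable edge is not among the `x` edges of symbol `x`'s arc.
  have hblock : ∀ e ∈ E, ∀ x : ℕ, 1 ≤ x → x ≤ m - 1 →
      ∀ j : ℕ, j < x → e ≠ v x + (j : ZMod (2*m)) := by
    intro e he x hx1 hx2 j hj heq
    have hxm : x ∈ Finset.Icc 1 m := Finset.mem_Icc.mpr ⟨hx1, by omega⟩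
    obtain ⟨k, hk1, hk2, hfk, hfkx⟩ := hE e he x hxm
    have h1 := hv3 x hxm _ hfk
    have h2 := hv3 x hxm _ hfkx
    push_cast at h2
    rcases h1 with h1l | h1r
    · -- e + k = v x, and e = v x + j forces 2m ∣ j + k with 0 < j + k < 2m
      have hz : ((j + k : ℕ) : ZMod (2*m)) = 0 := by
        push_cast
        linear_combination h1l - heq
      rw [ZMod.natCast_eq_zero_iff] at hz
      have := Nat.le_of_dvd (by omega) hz
      omega
    · rcases h2 with h2l | h2r
      · have hz : ((x + x : ℕ) : ZMod (2*m)) = 0 := by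
          push_cast
          linear_combination h2l - h1r
        rw [ZMod.natCast_eq_zero_iff] at hz
        have := Nat.le_of_dvd (by omega) hz
        omega
      · have hz : ((x : ℕ) : ZMod (2*m)) = 0 := by
          linear_combination h2r - h1r
        exact hcast_ne x hx1 (by omega) hz
  have hEne : E.Nonempty := Finset.card_pos.mp htE
  set prev : ZMod (2*m) → ZMod (2*m) := skPrev m E hEne with hprev_def
  set g : ZMod (2*m) → ℕ :=
    fun e => (Finset.univ.filter (fun w => prev w = e)).card with hg_def
  have hprev_mem : ∀ w, prev w ∈ E := fun w => skPrev_mem m E hEne w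
  -- total gap size
  have hsum : ∑ e ∈ E, g e = 2 * m := by
    have h := Finset.card_eq_sum_card_fiberwise
      (f := prev) (s := (Finset.univ : Finset (ZMod (2*m)))) (t := E)
      (fun w _ => hprev_mem w)
    rw [Finset.card_univ, ZMod.card] at h
    exact h.symm
  -- each gap nonempty
  have hpos : ∀ e ∈ E, 1 ≤ g e := by
    intro e he
    have h1 : (e + 1 - 1 - e).val = 0 := by
      have : e + 1 - 1 - e = 0 := by ring
      rw [this, ZMod.val_zero]
    have h0 : skDmin m E hEne (e+1) = 0 :=
      Nat.le_antisymm (h1 ▸ skDmin_le m E hEne (e+1) he) (Nat.zero_le _)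
    have hpe : prev (e+1) = e := by
      rw [hprev_def]
      unfold skPrev
      rw [h0]
      push_cast
      ring
    rw [hg_def]
    exact Finset.card_pos.mpr ⟨e+1, Finset.mem_filter.mpr ⟨Finset.mem_univ _, hpe⟩⟩
  -- every cut is at backward-distance ≥ x from v x
  have hb : ∀ x : ℕ, 1 ≤ x → x ≤ m - 1 → ∀ e ∈ E, x ≤ (e - v x).val := by
    intro x hx1 hx2 e he
    by_contra h
    push_neg at h
    have heq : e = v x + (((e - v x).val : ℕ) : ZMod (2*m)) := by
      rw [ZMod.natCast_val, ZMod.cast_id]; ring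
    exact hblock e he x hx1 hx2 _ h heq
  -- hence `(v x - 1 - e).val + x ≤ 2m - 1` for every cut e
  have ha : ∀ x : ℕ, 1 ≤ x → x ≤ m - 1 → ∀ e ∈ E,
      (v x - 1 - e).val + x ≤ 2*m - 1 := by
    intro x hx1 hx2 e he
    have hbv := hb x hx1 hx2 e he
    have hblt : (e - v x).val < 2*m := ZMod.val_lt _
    have heq : v x - 1 - e = -((e - v x) + 1) := by ring
    rw [heq]
    have hadd : ((e - v x) + 1).val = ((e - v x).val + 1) % (2*m) := by
      rw [ZMod.val_add, ZMod.val_one]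
    by_cases hc : (e - v x).val + 1 = 2*m
    · have hzero : (e - v x) + 1 = 0 := by
        rw [← ZMod.val_eq_zero, hadd, hc, Nat.mod_self]
      rw [hzero, neg_zero, ZMod.val_zero]
      omega
    · have hlt : (e - v x).val + 1 < 2*m := by omega
      have hadd' : ((e - v x) + 1).val = (e - v x).val + 1 := by
        rw [hadd, Nat.mod_eq_of_lt hlt]
      have hne0 : (e - v x) + 1 ≠ 0 := by
        intro h0
        rw [← ZMod.val_eq_zero] at h0
        omega
      rw [ZMod.neg_val, if_neg hne0, hadd']
      omega
  -- shifting along the arc adds j to the backward distance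
  have hshift : ∀ x : ℕ, 1 ≤ x → x ≤ m - 1 → ∀ e ∈ E, ∀ j : ℕ, j ≤ x →
      (v x + (j : ZMod (2*m)) - 1 - e).val = (v x - 1 - e).val + j := by
    intro x hx1 hx2 e he j hj
    have heq : v x + (j : ZMod (2*m)) - 1 - e = (v x - 1 - e) + (j : ZMod (2*m)) := by
      ring
    rw [heq, ZMod.val_add, ZMod.val_natCast]
    have hj' : j % (2*m) = j := Nat.mod_eq_of_lt (by omega)
    rw [hj']
    apply Nat.mod_eq_of_lt
    have := ha x hx1 hx2 e he
    omega
  have hdmin_shift : ∀ x : ℕ, 1 ≤ x → x ≤ m - 1 → ∀ j : ℕ, j ≤ x →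
      skDmin m E hEne (v x + (j : ZMod (2*m))) = skDmin m E hEne (v x) + j := by
    intro x hx1 hx2 j hj
    obtain ⟨e1, he1, hval1, _⟩ := skDmin_ex m E hEne (v x)
    obtain ⟨e2, he2, hval2, _⟩ := skDmin_ex m E hEne (v x + (j : ZMod (2*m)))
    have hle1 : skDmin m E hEne (v x + (j : ZMod (2*m))) ≤ skDmin m E hEne (v x) + j := by
      calc skDmin m E hEne (v x + (j : ZMod (2*m)))
          ≤ (v x + (j : ZMod (2*m)) - 1 - e1).val := skDmin_le m E hEne _ he1
        _ = (v x - 1 - e1).val + j := hshift x hx1 hx2 e1 he1 j hj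
        _ = skDmin m E hEne (v x) + j := by rw [hval1]
    have hle2 : skDmin m E hEne (v x) + j ≤ skDmin m E hEne (v x + (j : ZMod (2*m))) := by
      calc skDmin m E hEne (v x) + j
          ≤ (v x - 1 - e2).val + j :=
            Nat.add_le_add_right (skDmin_le m E hEne _ he2) j
        _ = (v x + (j : ZMod (2*m)) - 1 - e2).val := (hshift x hx1 hx2 e2 he2 j hj).symm
        _ = skDmin m E hEne (v x + (j : ZMod (2*m))) := hval2
    omega
  have hprev_shift : ∀ x : ℕ, 1 ≤ x → x ≤ m - 1 → ∀ j : ℕ, j ≤ x →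
      prev (v x + (j : ZMod (2*m))) = prev (v x) := by
    intro x hx1 hx2 j hj
    rw [hprev_def]
    unfold skPrev
    rw [hdmin_shift x hx1 hx2 j hj]
    push_cast
    ring
  -- the arc of symbol x lies in the gap of prev (v x): gap size ≥ x + 1
  have harcg : ∀ x : ℕ, 1 ≤ x → x ≤ m - 1 → x + 1 ≤ g (prev (v x)) := by
    intro x hx1 hx2
    set A := (Finset.range (x+1)).image (fun j : ℕ => v x + (j : ZMod (2*m))) with hA_def
    have hAcard : A.card = x + 1 := by
      rw [hA_def, Finset.card_image_of_injOn, Finset.card_range]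
      intro j hj j' hj' hjj
      simp only [Finset.coe_range, Set.mem_Iio] at hj hj'
      have : ((j : ZMod (2*m))).val = ((j' : ZMod (2*m))).val := by
        simpa using congrArg ZMod.val (add_left_cancel hjj)
      rw [ZMod.val_natCast, ZMod.val_natCast, Nat.mod_eq_of_lt (by omega),
        Nat.mod_eq_of_lt (by omega)] at this
      exact this
    have hAsub : A ⊆ Finset.univ.filter (fun w => prev w = prev (v x)) := by
      intro w hw
      rw [hA_def] at hw
      obtain ⟨j, hj, rfl⟩ := Finset.mem_image.mp hw
      rw [Finset.mem_range] at hj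
      exact Finset.mem_filter.mpr ⟨Finset.mem_univ _, hprev_shift x hx1 hx2 j (by omega)⟩
    calc x + 1 = A.card := hAcard.symm
      _ ≤ _ := Finset.card_le_card hAsub
  -- the key threshold inequality
  have hkey : ∀ s : ℕ, 1 ≤ s → ∀ S ⊆ E, (∀ e ∈ E \ S, g e ≤ s) →
      2 * m ≤ 2 * s + ∑ e ∈ S, g e := by
    intro s hs1 S hSE hbound
    by_cases hsm : m ≤ s
    · have : 2 * m ≤ 2 * s := by omega
      omega
    · push_neg at hsm
      set X := Finset.Icc s (m-1) with hX_def
      have hXmem : ∀ x ∈ X, s ≤ x ∧ 1 ≤ x ∧ x ≤ m - 1 := by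
        intro x hx
        rw [hX_def, Finset.mem_Icc] at hx
        exact ⟨hx.1, by omega, hx.2⟩
      have hXcard : X.card = m - s := by
        rw [hX_def, Nat.card_Icc]
        omega
      have hmemS : ∀ x ∈ X, prev (v x) ∈ S := by
        intro x hx
        obtain ⟨hsx, hx1, hx2⟩ := hXmem x hx
        have hgx := harcg x hx1 hx2
        have hEmem : prev (v x) ∈ E := hprev_mem _
        by_contra hnot
        have hmem : prev (v x) ∈ E \ S := Finset.mem_sdiff.mpr ⟨hEmem, hnot⟩
        have := hbound _ hmem
        omega
      set T := X.biUnion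
        (fun x => ({v x, v x + (x : ZMod (2*m))} : Finset (ZMod (2*m)))) with hT_def
      have hpairf : ∀ x ∈ X, ∀ w ∈ ({v x, v x + (x : ZMod (2*m))} : Finset (ZMod (2*m))),
          f w = x := by
        intro x hx w hw
        obtain ⟨_, hx1, hx2⟩ := hXmem x hx
        have hxm : x ∈ Finset.Icc 1 m := Finset.mem_Icc.mpr ⟨hx1, by omega⟩
        rcases Finset.mem_insert.mp hw with rfl | hw
        · exact hv1 x hxm
        · rw [Finset.mem_singleton.mp hw]
          exact hv2 x hxm
      have hTcard : T.card = 2 * (m - s) := by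
        rw [hT_def, Finset.card_biUnion]
        · have hpair : ∀ x ∈ X,
              ({v x, v x + (x : ZMod (2*m))} : Finset (ZMod (2*m))).card = 2 := by
            intro x hx
            obtain ⟨_, hx1, hx2⟩ := hXmem x hx
            rw [Finset.card_insert_of_notMem, Finset.card_singleton]
            rw [Finset.mem_singleton]
            intro hcontra
            exact hcast_ne x hx1 (by omega) (by linear_combination -hcontra)
          rw [Finset.sum_congr rfl hpair, Finset.sum_const, hXcard]
          ring
        · intro x hx y hy hxy
          rw [Function.onFun, Finset.disjoint_left]
          intro w hwx hwy
          have := hpairf x hx w hwx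
          have := hpairf y hy w hwy
          omega
      have hTsub : T ⊆ S.biUnion (fun e => Finset.univ.filter (fun w => prev w = e)) := by
        intro w hw
        rw [hT_def] at hw
        obtain ⟨x, hx, hwp⟩ := Finset.mem_biUnion.mp hw
        obtain ⟨_, hx1, hx2⟩ := hXmem x hx
        have hpw : prev w = prev (v x) := by
          rcases Finset.mem_insert.mp hwp with rfl | hwp
          · rfl
          · rw [Finset.mem_singleton.mp hwp]
            exact hprev_shift x hx1 hx2 x le_rfl
        exact Finset.mem_biUnion.mpr ⟨prev (v x), hmemS x hx,
          Finset.mem_filter.mpr ⟨Finset.mem_univ _, hpw⟩⟩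
      have h1 : T.card ≤ (S.biUnion (fun e => Finset.univ.filter (fun w => prev w = e))).card :=
        Finset.card_le_card hTsub
      have h2 : (S.biUnion (fun e => Finset.univ.filter (fun w => prev w = e))).card
          ≤ ∑ e ∈ S, g e := Finset.card_biUnion_le
      rw [hTcard] at h1
      omega
  exact skolem_greedy_aux m E g hsum hpos hkey htE

/-- A Skolem circle of order `m ≥ 2` has at most `2 + log₂ m` removable edges. -/
theorem removable_edges_le_log (m : ℕ) (hm : 2 ≤ m) (f : ZMod (2 * m) → ℕ)
    (hf : IsSkolemCircleLabel m f) :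
    ({e : ZMod (2 * m) | RemovableEdge m f e}.ncard : ℝ) ≤ 2 + Real.logb 2 m := by
  classical
  haveI : NeZero (2*m) := ⟨by omega⟩
  have hfin : {e : ZMod (2*m) | RemovableEdge m f e}.Finite := Set.toFinite _
  rw [Set.ncard_eq_toFinset_card _ hfin]
  set E := hfin.toFinset with hE_def
  have hlogb0 : 0 ≤ Real.logb 2 m :=
    Real.logb_nonneg (by norm_num) (by exact_mod_cast (by omega : 1 ≤ m))
  by_cases hE2 : E.card ≤ 2
  · have h2 : (E.card : ℝ) ≤ 2 := by exact_mod_cast hE2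
    linarith
  · push_neg at hE2
    have hmemE : ∀ e ∈ E, RemovableEdge m f e := by
      intro e he
      rw [hE_def, Set.Finite.mem_toFinset] at he
      exact he
    have hbound := skolem_key_bound m hm f hf E hmemE (by omega)
    have hb2 : 2 ^ (E.card - 2) ≤ m := by
      have hpow : 2 ^ (E.card - 1) = 2 * 2 ^ (E.card - 2) := by
        rw [← pow_succ']
        congr 1
        omega
      omega
    have hlog : ((E.card - 2 : ℕ) : ℝ) ≤ Real.logb 2 m := by
      calc ((E.card - 2 : ℕ) : ℝ) = Real.logb 2 ((2:ℝ) ^ (E.card - 2)) := by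
            rw [Real.logb_pow, Real.logb_self_eq_one (by norm_num)]; ring
        _ ≤ Real.logb 2 m := by
            apply Real.logb_le_logb_of_le (by norm_num) (by positivity)
            exact_mod_cast hb2
    have hsplit : (E.card : ℝ) = 2 + ((E.card - 2 : ℕ) : ℝ) := by
      have h2le : 2 ≤ E.card := by omega
      rw [Nat.cast_sub h2le]
      ring
    linarith
end
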